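/- Let a > 0 and let (T,n,b) solve the Frenet system with curvature c ≡ a, torsion τ(x) = x/2, and orthonormal frame at 0. Then the limits A⁺ = lim_{x→+∞} T(x) and A⁻ = lim_{x→−∞} T(x) exist in ℝ³ and are unit vectors. -/

import Mathlib

open Matrix Filter

/-- An orthonormal frame of three vectors in ℝ³ (Euclidean inner product). -/
def IsOrthonormalFrame (T n b : Fin 3 → ℝ) : Prop :=
  T ⬝ᵥ T = 1 ∧ n ⬝ᵥ n = 1 ∧ b ⬝ᵥ b = 1 ∧
  T ⬝ᵥ n = 0 ∧ T ⬝ᵥ b = 0 ∧ n ⬝ᵥ b = 0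

lemma hasDerivAt_dot {f g : ℝ → Fin 3 → ℝ} {f' g' : Fin 3 → ℝ} {x : ℝ}
    (hf : HasDerivAt f f' x) (hg : HasDerivAt g g' x) :
    HasDerivAt (fun y => f y ⬝ᵥ g y) (f' ⬝ᵥ g x + f x ⬝ᵥ g') x := by
  have h : ∀ i, HasDerivAt (fun y => f y i * g y i) (f' i * g x i + f x i * g' i) x :=
    fun i => (hasDerivAt_pi.mp hf i).mul (hasDerivAt_pi.mp hg i)
  have := HasDerivAt.fun_sum (u := Finset.univ) (fun i _ => h i)
  simpa [dotProduct, Finset.sum_add_distrib] using this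

set_option maxHeartbeats 1600000 in
lemma frame_all (a : ℝ) (T n b : ℝ → Fin 3 → ℝ)
    (hT : ∀ x : ℝ, HasDerivAt T (a • n x) x)
    (hn : ∀ x : ℝ, HasDerivAt n (-(a • T x) + (x / 2) • b x) x)
    (hb : ∀ x : ℝ, HasDerivAt b (-((x / 2) • n x)) x)
    (h0 : IsOrthonormalFrame (T 0) (n 0) (b 0)) :
    ∀ x : ℝ, IsOrthonormalFrame (T x) (n x) (b x) := by
  set φ : ℝ → ℝ := fun x =>
    (T x ⬝ᵥ T x - 1)^2 + (n x ⬝ᵥ n x - 1)^2 + (b x ⬝ᵥ b x - 1)^2 +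
    2*(T x ⬝ᵥ n x)^2 + 2*(T x ⬝ᵥ b x)^2 + 2*(n x ⬝ᵥ b x)^2 with hφdef
  have hderiv : ∀ x, HasDerivAt φ 0 x := by
    intro x
    have dTT : HasDerivAt (fun y => T y ⬝ᵥ T y) (2*a*(T x ⬝ᵥ n x)) x := by
      have h := hasDerivAt_dot (hT x) (hT x)
      convert h using 1
      simp only [smul_dotProduct, dotProduct_smul, smul_eq_mul,
        dotProduct_comm (n x) (T x)]
      ring
    have dnn : HasDerivAt (fun y => n y ⬝ᵥ n y)
        (-(2*a*(T x ⬝ᵥ n x)) + x*(n x ⬝ᵥ b x)) x := by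
      have h := hasDerivAt_dot (hn x) (hn x)
      convert h using 1
      simp only [smul_dotProduct, dotProduct_smul, add_dotProduct,
        dotProduct_add, neg_dotProduct, dotProduct_neg, smul_eq_mul,
        dotProduct_comm (n x) (T x), dotProduct_comm (b x) (n x)]
      ring
    have dbb : HasDerivAt (fun y => b y ⬝ᵥ b y) (-(x*(n x ⬝ᵥ b x))) x := by
      have h := hasDerivAt_dot (hb x) (hb x)
      convert h using 1
      simp only [smul_dotProduct, dotProduct_smul, neg_dotProduct,
        dotProduct_neg, smul_eq_mul, dotProduct_comm (b x) (n x)]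
      ring
    have dTn : HasDerivAt (fun y => T y ⬝ᵥ n y)
        (a*(n x ⬝ᵥ n x) - a*(T x ⬝ᵥ T x) + (x/2)*(T x ⬝ᵥ b x)) x := by
      have h := hasDerivAt_dot (hT x) (hn x)
      convert h using 1
      simp only [smul_dotProduct, dotProduct_smul, add_dotProduct,
        dotProduct_add, neg_dotProduct, dotProduct_neg, smul_eq_mul,
        dotProduct_comm (n x) (T x)]
      ring
    have dTb : HasDerivAt (fun y => T y ⬝ᵥ b y)
        (a*(n x ⬝ᵥ b x) - (x/2)*(T x ⬝ᵥ n x)) x := by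
      have h := hasDerivAt_dot (hT x) (hb x)
      convert h using 1
      simp only [smul_dotProduct, dotProduct_smul, neg_dotProduct,
        dotProduct_neg, smul_eq_mul, dotProduct_comm (b x) (T x)]
      ring
    have dnb : HasDerivAt (fun y => n y ⬝ᵥ b y)
        (-(a*(T x ⬝ᵥ b x)) + (x/2)*(b x ⬝ᵥ b x) - (x/2)*(n x ⬝ᵥ n x)) x := by
      have h := hasDerivAt_dot (hn x) (hb x)
      convert h using 1
      simp only [smul_dotProduct, dotProduct_smul, add_dotProduct,
        dotProduct_add, neg_dotProduct, dotProduct_neg, smul_eq_mul,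
        dotProduct_comm (b x) (n x), dotProduct_comm (b x) (T x)]
      ring
    have H := ((((((dTT.sub_const 1).pow 2).add ((dnn.sub_const 1).pow 2)).add
      ((dbb.sub_const 1).pow 2)).add ((dTn.pow 2).const_mul 2)).add
      ((dTb.pow 2).const_mul 2)).add ((dnb.pow 2).const_mul 2)
    exact H.congr_deriv (by ring)
  have hconst : ∀ x, φ x = φ 0 :=
    fun x => is_const_of_deriv_eq_zero (fun y => (hderiv y).differentiableAt)
      (fun y => (hderiv y).deriv) x 0
  obtain ⟨e1, e2, e3, e4, e5, e6⟩ := h0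
  have hφ0 : φ 0 = 0 := by
    simp only [hφdef, e1, e2, e3, e4, e5, e6]
    norm_num
  intro x
  have hx : φ x = 0 := (hconst x).trans hφ0
  simp only [hφdef] at hx
  constructor
  · nlinarith [sq_nonneg (T x ⬝ᵥ T x - 1), sq_nonneg (n x ⬝ᵥ n x - 1),
      sq_nonneg (b x ⬝ᵥ b x - 1), sq_nonneg (T x ⬝ᵥ n x), sq_nonneg (T x ⬝ᵥ b x),
      sq_nonneg (n x ⬝ᵥ b x)]
  refine ⟨?_, ?_, ?_, ?_, ?_⟩ <;>
  nlinarith [sq_nonneg (T x ⬝ᵥ T x - 1), sq_nonneg (n x ⬝ᵥ n x - 1),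
      sq_nonneg (b x ⬝ᵥ b x - 1), sq_nonneg (T x ⬝ᵥ n x), sq_nonneg (T x ⬝ᵥ b x),
      sq_nonneg (n x ⬝ᵥ b x)]

lemma norm_le_one_of_dot (v : Fin 3 → ℝ) (hv : v ⬝ᵥ v = 1) : ‖v‖ ≤ 1 := by
  rw [pi_norm_le_iff_of_nonneg zero_le_one]
  intro i
  rw [Real.norm_eq_abs, abs_le]
  have h : v i * v i ≤ 1 := by
    have := Finset.single_le_sum (f := fun j => v j * v j)
      (fun j _ => mul_self_nonneg (v j)) (Finset.mem_univ i)
    simpa [dotProduct] using this.trans_eq hv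
  constructor <;> nlinarith

lemma aux (a : ℝ) (ha : 0 < a) (T n b : ℝ → Fin 3 → ℝ)
    (hT : ∀ x : ℝ, HasDerivAt T (a • n x) x)
    (hn : ∀ x : ℝ, HasDerivAt n (-(a • T x) + (x / 2) • b x) x)
    (hb : ∀ x : ℝ, HasDerivAt b (-((x / 2) • n x)) x)
    (h0 : IsOrthonormalFrame (T 0) (n 0) (b 0)) :
    ∃ A : Fin 3 → ℝ, Tendsto T atTop (nhds A) ∧ A ⬝ᵥ A = 1 := by
  have hframe := frame_all a T n b hT hn hb h0
  have hbnorm : ∀ x, ‖b x‖ ≤ 1 := fun x => norm_le_one_of_dot _ (hframe x).2.2.1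
  -- corrected function h
  set H : ℝ → Fin 3 → ℝ := fun x => T x + (2*a/x) • b x with hHdef
  have hH' : ∀ x : ℝ, x ≠ 0 → HasDerivAt H (-(2*a/x^2) • b x) x := by
    intro x hx
    have h1 : HasDerivAt (fun y : ℝ => 2*a/y) (-(2*a)/x^2) x := by
      have := (hasDerivAt_const x (2*a)).div (hasDerivAt_id x) hx; simp at this; exact this
    have h2 := h1.smul (hb x)
    have := (hT x).add h2
    refine this.congr_deriv ?_
    have hax : (2*a/x) * (x/2) = a := by field_simp
    simp only [smul_neg, smul_smul, hax]
    module
  -- estimate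
  have est : ∀ x y : ℝ, 1 ≤ x → x ≤ y → ‖H y - H x‖ ≤ 2*a/x := by
    intro x y hx hxy
    have key : ∀ t ∈ Set.Icc x y, ‖H t - H x‖ ≤ 2*a/x - 2*a/t := by
      refine image_norm_le_of_norm_deriv_right_le_deriv_boundary'
        (f := fun t => H t - H x) (f' := fun t => -(2*a/t^2) • b t)
        (B := fun t => 2*a/x - 2*a/t) (B' := fun t => 2*a/t^2) ?_ ?_ ?_ ?_ ?_ ?_
      · intro t ht
        have htne : t ≠ 0 := by intro h; rw [h] at ht; linarith [ht.1]
        exact (((hH' t htne).sub_const (H x)).continuousAt).continuousWithinAt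
      · intro t ht
        have htne : t ≠ 0 := by intro h; rw [h] at ht; linarith [ht.1]
        exact ((hH' t htne).sub_const (H x)).hasDerivWithinAt
      · simp
      · intro t ht
        have htne : t ≠ 0 := by intro h; rw [h] at ht; linarith [ht.1]
        have : HasDerivAt (fun t : ℝ => 2*a/x - 2*a/t) (2*a/t^2) t := by
          have h1 : HasDerivAt (fun y : ℝ => 2*a/y) (-(2*a)/t^2) t := by
            have := (hasDerivAt_const t (2*a)).div (hasDerivAt_id t) htne; simp at this; exact this
          have := (hasDerivAt_const t (2*a/x)).sub h1
          exact this.congr_deriv (by ring)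
        exact this.continuousAt.continuousWithinAt
      · intro t ht
        have htne : t ≠ 0 := by intro h; rw [h] at ht; linarith [ht.1]
        have : HasDerivAt (fun t : ℝ => 2*a/x - 2*a/t) (2*a/t^2) t := by
          have h1 : HasDerivAt (fun y : ℝ => 2*a/y) (-(2*a)/t^2) t := by
            have := (hasDerivAt_const t (2*a)).div (hasDerivAt_id t) htne; simp at this; exact this
          have := (hasDerivAt_const t (2*a/x)).sub h1
          exact this.congr_deriv (by ring)
        exact this.hasDerivWithinAt
      · intro t ht
        have ht1 : (1:ℝ) ≤ t := le_trans hx ht.1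
        have htpos : 0 < t := lt_of_lt_of_le one_pos ht1
        rw [norm_smul]
        calc ‖-(2*a/t^2)‖ * ‖b t‖ ≤ ‖-(2*a/t^2)‖ * 1 := by
              apply mul_le_mul_of_nonneg_left (hbnorm t) (norm_nonneg _)
          _ = 2*a/t^2 := by
              rw [mul_one, norm_neg, Real.norm_eq_abs, abs_of_nonneg]
              positivity
    have := key y ⟨hxy, le_refl y⟩
    have hy1 : (1:ℝ) ≤ y := le_trans hx hxy
    have : ‖H y - H x‖ ≤ 2*a/x - 2*a/y := this
    have hyp : 0 < y := lt_of_lt_of_le one_pos hy1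
    have : 2*a/x - 2*a/y ≤ 2*a/x := by
      have : 0 ≤ 2*a/y := by positivity
      linarith
    linarith
  -- Cauchy
  have hcauchy : CauchySeq H := by
    rw [Metric.cauchySeq_iff']
    intro ε hε
    refine ⟨max 1 (4*a/ε), ?_⟩
    intro m hm
    have h1 : (1:ℝ) ≤ max 1 (4*a/ε) := le_max_left _ _
    have h2 : 4*a/ε ≤ max 1 (4*a/ε) := le_max_right _ _
    have := est (max 1 (4*a/ε)) m h1 hm
    rw [dist_eq_norm]
    have hNpos : (0:ℝ) < max 1 (4*a/ε) := lt_of_lt_of_le one_pos h1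
    have hlt : 2*a/(max 1 (4*a/ε)) < ε := by
      rw [div_lt_iff₀ hNpos]
      have : 4*a/ε ≤ max 1 (4*a/ε) := h2
      have h3 : ε * (4*a/ε) = 4*a := by field_simp
      nlinarith [mul_le_mul_of_nonneg_left h2 (le_of_lt hε)]
    linarith
  obtain ⟨L, hL⟩ := cauchySeq_tendsto_of_complete hcauchy
  -- (2a/x) • b x → 0
  have hsmall : Tendsto (fun x : ℝ => (2*a/x) • b x) atTop (nhds 0) := by
    have hub : ∀ᶠ x in atTop, ‖(2*a/x) • b x‖ ≤ 2*a/x := by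
      filter_upwards [eventually_ge_atTop (1:ℝ)] with x hx
      rw [norm_smul]
      have hxpos : (0:ℝ) < x := lt_of_lt_of_le one_pos hx
      calc ‖2*a/x‖ * ‖b x‖ ≤ ‖2*a/x‖ * 1 :=
            mul_le_mul_of_nonneg_left (hbnorm x) (norm_nonneg _)
        _ = 2*a/x := by rw [mul_one, Real.norm_eq_abs, abs_of_nonneg]; positivity
    have hto : Tendsto (fun x : ℝ => 2*a/x) atTop (nhds 0) :=
      Tendsto.div_atTop tendsto_const_nhds tendsto_id
    exact squeeze_zero_norm' hub hto
  have hTlim : Tendsto T atTop (nhds L) := by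
    have := hL.sub hsmall
    rw [sub_zero] at this
    convert this using 2 with x
    simp [hHdef]
  refine ⟨L, hTlim, ?_⟩
  have hcont : Continuous (fun v : Fin 3 → ℝ => v ⬝ᵥ v) := by
    unfold dotProduct; fun_prop
  have h1 : Tendsto (fun x => T x ⬝ᵥ T x) atTop (nhds (L ⬝ᵥ L)) :=
    (hcont.tendsto L).comp hTlim
  have h2 : Tendsto (fun x => T x ⬝ᵥ T x) atTop (nhds 1) := by
    have : (fun x => T x ⬝ᵥ T x) = fun _ => (1:ℝ) := funext fun x => (hframe x).1
    rw [this]; exact tendsto_const_nhds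
  exact tendsto_nhds_unique h1 h2

/-- the tangent of the self-similar Frenet frame has unit-vector
limits at `±∞`. -/
theorem selfsimilar_frenet_tangent_limits
    (a : ℝ) (ha : 0 < a) (T n b : ℝ → Fin 3 → ℝ)
    (hT : ∀ x : ℝ, HasDerivAt T (a • n x) x)
    (hn : ∀ x : ℝ, HasDerivAt n (-(a • T x) + (x / 2) • b x) x)
    (hb : ∀ x : ℝ, HasDerivAt b (-((x / 2) • n x)) x)
    (h0 : IsOrthonormalFrame (T 0) (n 0) (b 0)) :
    ∃ Aplus Aminus : Fin 3 → ℝ,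
      Tendsto T atTop (nhds Aplus) ∧ Tendsto T atBot (nhds Aminus) ∧
      Aplus ⬝ᵥ Aplus = 1 ∧ Aminus ⬝ᵥ Aminus = 1 := by
  obtain ⟨Ap, hAp, hAp1⟩ := aux a ha T n b hT hn hb h0
  -- reflected system
  set T2 : ℝ → Fin 3 → ℝ := fun x => T (-x) with hT2
  set n2 : ℝ → Fin 3 → ℝ := fun x => -n (-x) with hn2
  set b2 : ℝ → Fin 3 → ℝ := fun x => -b (-x) with hb2
  have hneg : ∀ x : ℝ, HasDerivAt (fun y : ℝ => -y) (-1 : ℝ) x := fun x => (hasDerivAt_id x).neg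
  have hT' : ∀ x : ℝ, HasDerivAt T2 (a • n2 x) x := by
    intro x
    have := (hT (-x)).scomp x (hneg x)
    refine this.congr_deriv ?_
    simp [hn2]
    try module
  have hn' : ∀ x : ℝ, HasDerivAt n2 (-(a • T2 x) + (x / 2) • b2 x) x := by
    intro x
    have := ((hn (-x)).scomp x (hneg x)).neg
    refine this.congr_deriv ?_
    simp [hT2, hb2]
    try module
  have hb' : ∀ x : ℝ, HasDerivAt b2 (-((x / 2) • n2 x)) x := by
    intro x
    have := ((hb (-x)).scomp x (hneg x)).neg
    refine this.congr_deriv ?_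
    simp [hn2]
    try module
  have h0' : IsOrthonormalFrame (T2 0) (n2 0) (b2 0) := by
    obtain ⟨e1, e2, e3, e4, e5, e6⟩ := h0
    refine ⟨?_, ?_, ?_, ?_, ?_, ?_⟩ <;>
      simp [hT2, hn2, hb2, neg_dotProduct, dotProduct_neg, e1, e2, e3, e4, e5, e6]
  obtain ⟨Am, hAm, hAm1⟩ := aux a ha T2 n2 b2 hT' hn' hb' h0'
  refine ⟨Ap, Am, hAp, ?_, hAp1, hAm1⟩
  have : Tendsto (fun x : ℝ => T2 (-x)) atBot (nhds Am) :=
    hAm.comp tendsto_neg_atBot_atTop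
  exact this.congr fun x => by simp [hT2]
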